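/- There exist four points in ℝ² with pairwise integer distances, no three collinear and no four concyclic, whose largest pairwise distance is 8, and any such four-point configuration has largest pairwise distance at least 8. -/

import Mathlib

/-- A family of points is in general position with pairwise integral distances. -/
def GoodConfig {n : ℕ} (P : Fin n → EuclideanSpace ℝ (Fin 2)) : Prop :=
  Function.Injective P ∧
  (∀ i j : Fin n, ∃ m : ℕ, dist (P i) (P j) = m) ∧
  (∀ i j k : Fin n, i ≠ j → i ≠ k → j ≠ k →
    ¬ Collinear ℝ ({P i, P j, P k} : Set (EuclideanSpace ℝ (Fin 2)))) ∧
  (∀ i j k l : Fin n, i ≠ j → i ≠ k → i ≠ l → j ≠ k → j ≠ l → k ≠ l →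
    ¬ ∃ (c : EuclideanSpace ℝ (Fin 2)) (ρ : ℝ), 0 < ρ ∧
        dist (P i) c = ρ ∧ dist (P j) c = ρ ∧ dist (P k) c = ρ ∧ dist (P l) c = ρ)

/-- The configuration has diameter (largest pairwise distance) `d`. -/
def HasDiameter {n : ℕ} (P : Fin n → EuclideanSpace ℝ (Fin 2)) (d : ℝ) : Prop :=
  (∀ i j : Fin n, dist (P i) (P j) ≤ d) ∧ ∃ i j : Fin n, dist (P i) (P j) = d



open scoped RealInnerProductSpace

noncomputable def pt (x y : ℝ) : EuclideanSpace ℝ (Fin 2) :=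
  (WithLp.equiv 2 (Fin 2 → ℝ)).symm ![x, y]

lemma dist_pt (x₁ y₁ x₂ y₂ : ℝ) :
    dist (pt x₁ y₁) (pt x₂ y₂) = Real.sqrt ((x₁ - x₂)^2 + (y₁ - y₂)^2) := by
  rw [EuclideanSpace.dist_eq]
  simp [pt, Fin.sum_univ_two, Real.dist_eq, sq_abs]

lemma sqrt_eval {a b : ℝ} (h : a = b^2) (hb : 0 ≤ b) : Real.sqrt a = b := by
  rw [h, Real.sqrt_sq hb]

lemma dist_pt_sq (x y ρ : ℝ) (c : EuclideanSpace ℝ (Fin 2)) (h : dist (pt x y) c = ρ) :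
    (x - c 0)^2 + (y - c 1)^2 = ρ^2 := by
  rw [EuclideanSpace.dist_eq] at h
  rw [← h, Real.sq_sqrt (by positivity)]
  simp [pt, Fin.sum_univ_two, Real.dist_eq, sq_abs]

lemma not_col {x y z : EuclideanSpace ℝ (Fin 2)}
    (h1 : dist x y + dist y z ≠ dist x z)
    (h2 : dist y z + dist z x ≠ dist y x)
    (h3 : dist z x + dist x y ≠ dist z y) :
    ¬ Collinear ℝ ({x, y, z} : Set (EuclideanSpace ℝ (Fin 2))) := by
  intro h
  rcases h.wbtw_or_wbtw_or_wbtw with hw | hw | hw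
  · exact h1 hw.dist_add_dist
  · exact h2 hw.dist_add_dist
  · exact h3 hw.dist_add_dist

noncomputable def Pex : Fin 4 → EuclideanSpace ℝ (Fin 2) :=
  ![pt 0 0, pt 8 0, pt 4 3, pt 4 (-3)]

noncomputable def dmat : Fin 4 → Fin 4 → ℝ :=
  ![![0,8,5,5],![8,0,5,5],![5,5,0,6],![5,5,6,0]]

lemma hd01 : dist (pt 0 0) (pt 8 0) = 8 := by
  rw [dist_pt]; exact sqrt_eval (by norm_num) (by norm_num)

lemma hd02 : dist (pt 0 0) (pt 4 3) = 5 := by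
  rw [dist_pt]; exact sqrt_eval (by norm_num) (by norm_num)

lemma hd03 : dist (pt 0 0) (pt 4 (-3)) = 5 := by
  rw [dist_pt]; exact sqrt_eval (by norm_num) (by norm_num)

lemma hd10 : dist (pt 8 0) (pt 0 0) = 8 := by
  rw [dist_pt]; exact sqrt_eval (by norm_num) (by norm_num)

lemma hd12 : dist (pt 8 0) (pt 4 3) = 5 := by
  rw [dist_pt]; exact sqrt_eval (by norm_num) (by norm_num)

lemma hd13 : dist (pt 8 0) (pt 4 (-3)) = 5 := by
  rw [dist_pt]; exact sqrt_eval (by norm_num) (by norm_num)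

lemma hd20 : dist (pt 4 3) (pt 0 0) = 5 := by
  rw [dist_pt]; exact sqrt_eval (by norm_num) (by norm_num)

lemma hd21 : dist (pt 4 3) (pt 8 0) = 5 := by
  rw [dist_pt]; exact sqrt_eval (by norm_num) (by norm_num)

lemma hd23 : dist (pt 4 3) (pt 4 (-3)) = 6 := by
  rw [dist_pt]; exact sqrt_eval (by norm_num) (by norm_num)

lemma hd30 : dist (pt 4 (-3)) (pt 0 0) = 5 := by
  rw [dist_pt]; exact sqrt_eval (by norm_num) (by norm_num)

lemma hd31 : dist (pt 4 (-3)) (pt 8 0) = 5 := by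
  rw [dist_pt]; exact sqrt_eval (by norm_num) (by norm_num)

lemma hd32 : dist (pt 4 (-3)) (pt 4 3) = 6 := by
  rw [dist_pt]; exact sqrt_eval (by norm_num) (by norm_num)

lemma hdistex : ∀ i j : Fin 4, dist (Pex i) (Pex j) = dmat i j := by
  intro i j
  fin_cases i <;> fin_cases j <;>
    simp [Pex, dmat, Matrix.vecHead, Matrix.vecTail, hd01, hd02, hd03, hd10, hd12, hd13,
      hd20, hd21, hd23, hd30, hd31, hd32]

noncomputable def nmat : Fin 4 → Fin 4 → ℕ :=
  ![![0,8,5,5],![8,0,5,5],![5,5,0,6],![5,5,6,0]]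

lemma Pex_good : GoodConfig Pex ∧ HasDiameter Pex 8 := by
  have hP0 : Pex 0 = pt 0 0 := rfl
  have hP1 : Pex 1 = pt 8 0 := rfl
  have hP2 : Pex 2 = pt 4 3 := rfl
  have hP3 : Pex 3 = pt 4 (-3) := rfl
  refine ⟨⟨?_, ?_, ?_, ?_⟩, ?_, 0, 1, by rw [hdistex]; norm_num [dmat]⟩
  · -- injective
    intro i j hij
    by_contra hne
    have h0 : dist (Pex i) (Pex j) = 0 := by rw [hij, dist_self]
    rw [hdistex] at h0
    fin_cases i <;> fin_cases j <;>
      first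
        | exact hne rfl
        | simp_all [dmat, Matrix.vecHead, Matrix.vecTail]
  · -- integral distances
    intro i j
    refine ⟨nmat i j, ?_⟩
    rw [hdistex]
    fin_cases i <;> fin_cases j <;>
      norm_num [dmat, nmat, Matrix.vecHead, Matrix.vecTail]
  · -- no three collinear
    intro i j k hij hik hjk
    have H := hdistex
    fin_cases i <;> fin_cases j <;> fin_cases k <;>
      first
        | exact absurd rfl hij
        | exact absurd rfl hik
        | exact absurd rfl hjk
        | (apply not_col <;>
            rw [hdistex, hdistex, hdistex] <;>
            norm_num [dmat, Matrix.vecHead, Matrix.vecTail])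
  · -- no four concyclic
    intro i j k l hij hik hil hjk hjl hkl ⟨c, ρ, hρ, h1, h2, h3, h4⟩
    have perm : ∀ (i j k l t : Fin 4), i≠j→i≠k→i≠l→j≠k→j≠l→k≠l→
        (t=i ∨ t=j ∨ t=k ∨ t=l) := by decide
    have hall : ∀ t : Fin 4, dist (Pex t) c = ρ := by
      intro t
      rcases perm i j k l t hij hik hil hjk hjl hkl with rfl|rfl|rfl|rfl <;> assumption
    have E0 := dist_pt_sq 0 0 ρ c (by rw [← hP0]; exact hall 0)
    have E1 := dist_pt_sq 8 0 ρ c (by rw [← hP1]; exact hall 1)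
    have E2 := dist_pt_sq 4 3 ρ c (by rw [← hP2]; exact hall 2)
    have E3 := dist_pt_sq 4 (-3) ρ c (by rw [← hP3]; exact hall 3)
    nlinarith [E0, E1, E2, E3]
  · -- diameter bound
    intro i j
    rw [hdistex]
    fin_cases i <;> fin_cases j <;>
      norm_num [dmat, Matrix.vecHead, Matrix.vecTail]

set_option maxRecDepth 100000 in
set_option maxHeartbeats 4000000 in
theorem key : ∀ a b d : Fin 8, (a.1 < b.1 + d.1 ∧ b.1 < a.1 + d.1 ∧ d.1 < a.1 + b.1 ∧ 1 ≤ a.1) →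
    ∀ c e : Fin 8, (a.1 < c.1 + e.1 ∧ c.1 < a.1 + e.1 ∧ e.1 < a.1 + c.1) →
    ∀ f : Fin 8, (b.1 < c.1 + f.1 ∧ c.1 < b.1 + f.1 ∧ f.1 < b.1 + c.1 ∧
      d.1 < e.1 + f.1 ∧ e.1 < d.1 + f.1 ∧ f.1 < d.1 + e.1) →
    ((c.1:ℤ)^2 * (4*(a.1:ℤ)^2*(b.1:ℤ)^2 - ((a.1:ℤ)^2+(b.1:ℤ)^2-(d.1:ℤ)^2)^2) =
      ((a.1:ℤ)^2+(c.1:ℤ)^2-(e.1:ℤ)^2)^2*(b.1:ℤ)^2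
      - ((a.1:ℤ)^2+(b.1:ℤ)^2-(d.1:ℤ)^2)*((a.1:ℤ)^2+(c.1:ℤ)^2-(e.1:ℤ)^2)*((b.1:ℤ)^2+(c.1:ℤ)^2-(f.1:ℤ)^2)
      + ((b.1:ℤ)^2+(c.1:ℤ)^2-(f.1:ℤ)^2)^2*(a.1:ℤ)^2) →
    ((c.1:ℤ)^2 * (4*(a.1:ℤ)^2*(b.1:ℤ)^2 - ((a.1:ℤ)^2+(b.1:ℤ)^2-(d.1:ℤ)^2)^2) =
      ((a.1:ℤ)^2+(c.1:ℤ)^2-(e.1:ℤ)^2)*(b.1:ℤ)^2*((a.1:ℤ)^2-(b.1:ℤ)^2+(d.1:ℤ)^2)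
      + ((b.1:ℤ)^2+(c.1:ℤ)^2-(f.1:ℤ)^2)*(a.1:ℤ)^2*((b.1:ℤ)^2-(a.1:ℤ)^2+(d.1:ℤ)^2)) := by
  decide

lemma norm_eq_of_sq_eq {x y : ℝ} (h : x^2 = y^2) (hx : 0 ≤ x) (hy : 0 ≤ y) : x = y := by
  nlinarith

lemma strict_tri {x y z : EuclideanSpace ℝ (Fin 2)}
    (h : ¬ Collinear ℝ ({x, y, z} : Set (EuclideanSpace ℝ (Fin 2)))) :
    dist x z < dist x y + dist y z := by
  rcases (dist_triangle x y z).lt_or_eq with h' | h'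
  · exact h'
  · exact absurd (dist_add_dist_eq_iff.mp h'.symm).collinear h

set_option maxHeartbeats 2000000 in
lemma lower_bound (P : Fin 4 → EuclideanSpace ℝ (Fin 2)) (hP : GoodConfig P) :
    ∃ i j : Fin 4, (8:ℝ) ≤ dist (P i) (P j) := by
  obtain ⟨hinj, hint, hcol, hcirc⟩ := hP
  by_contra hcon
  push_neg at hcon
  obtain ⟨a, ha⟩ := hint 0 1
  obtain ⟨b, hb⟩ := hint 0 2
  obtain ⟨c, hc⟩ := hint 0 3
  obtain ⟨d, hd⟩ := hint 1 2
  obtain ⟨e, he⟩ := hint 1 3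
  obtain ⟨f, hf⟩ := hint 2 3
  have ha' : dist (P 1) (P 0) = (a:ℝ) := by rw [dist_comm]; exact ha
  have hb' : dist (P 2) (P 0) = (b:ℝ) := by rw [dist_comm]; exact hb
  have hc' : dist (P 3) (P 0) = (c:ℝ) := by rw [dist_comm]; exact hc
  have hd' : dist (P 2) (P 1) = (d:ℝ) := by rw [dist_comm]; exact hd
  have he' : dist (P 3) (P 1) = (e:ℝ) := by rw [dist_comm]; exact he
  have hf' : dist (P 3) (P 2) = (f:ℝ) := by rw [dist_comm]; exact hf
  have ha8 : a < 8 := by have := hcon 0 1; rw [ha] at this; exact_mod_cast this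
  have hb8 : b < 8 := by have := hcon 0 2; rw [hb] at this; exact_mod_cast this
  have hc8 : c < 8 := by have := hcon 0 3; rw [hc] at this; exact_mod_cast this
  have hd8 : d < 8 := by have := hcon 1 2; rw [hd] at this; exact_mod_cast this
  have he8 : e < 8 := by have := hcon 1 3; rw [he] at this; exact_mod_cast this
  have hf8 : f < 8 := by have := hcon 2 3; rw [hf] at this; exact_mod_cast this
  have hpos : ∀ i j : Fin 4, i ≠ j → 0 < dist (P i) (P j) := fun i j hne =>
    dist_pos.mpr (fun hEq => hne (hinj hEq))
  have ha1 : 1 ≤ a := by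
    have h0 := hpos 0 1 (by decide); rw [ha] at h0
    have : 0 < a := by exact_mod_cast h0
    omega
  have tri : ∀ i j k : Fin 4, i ≠ j → i ≠ k → j ≠ k →
      dist (P i) (P k) < dist (P i) (P j) + dist (P j) (P k) :=
    fun i j k hij hik hjk => strict_tri (hcol i j k hij hik hjk)
  have T1 : a < b + d := by
    have h0 := tri 0 2 1 (by decide) (by decide) (by decide)
    rw [ha, hb, hd'] at h0; exact_mod_cast h0
  have T2 : b < a + d := by
    have h0 := tri 0 1 2 (by decide) (by decide) (by decide)
    rw [hb, ha, hd] at h0; exact_mod_cast h0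
  have T3 : d < a + b := by
    have h0 := tri 1 0 2 (by decide) (by decide) (by decide)
    rw [hd, ha', hb] at h0; exact_mod_cast h0
  have T4 : a < c + e := by
    have h0 := tri 0 3 1 (by decide) (by decide) (by decide)
    rw [ha, hc, he'] at h0; exact_mod_cast h0
  have T5 : c < a + e := by
    have h0 := tri 0 1 3 (by decide) (by decide) (by decide)
    rw [hc, ha, he] at h0; exact_mod_cast h0
  have T6 : e < a + c := by
    have h0 := tri 1 0 3 (by decide) (by decide) (by decide)
    rw [he, ha', hc] at h0; exact_mod_cast h0
  have T7 : b < c + f := by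
    have h0 := tri 0 3 2 (by decide) (by decide) (by decide)
    rw [hb, hc, hf'] at h0; exact_mod_cast h0
  have T8 : c < b + f := by
    have h0 := tri 0 2 3 (by decide) (by decide) (by decide)
    rw [hc, hb, hf] at h0; exact_mod_cast h0
  have T9 : f < b + c := by
    have h0 := tri 2 0 3 (by decide) (by decide) (by decide)
    rw [hf, hb', hc] at h0; exact_mod_cast h0
  have T10 : d < e + f := by
    have h0 := tri 1 3 2 (by decide) (by decide) (by decide)
    rw [hd, he, hf'] at h0; exact_mod_cast h0
  have T11 : e < d + f := by
    have h0 := tri 1 2 3 (by decide) (by decide) (by decide)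
    rw [he, hd, hf] at h0; exact_mod_cast h0
  have T12 : f < d + e := by
    have h0 := tri 2 1 3 (by decide) (by decide) (by decide)
    rw [hf, hd', he] at h0; exact_mod_cast h0
  -- vectors
  set v1 : EuclideanSpace ℝ (Fin 2) := P 1 - P 0 with hv1
  set v2 : EuclideanSpace ℝ (Fin 2) := P 2 - P 0 with hv2
  set v3 : EuclideanSpace ℝ (Fin 2) := P 3 - P 0 with hv3
  have n1 : ‖v1‖ = (a:ℝ) := by rw [hv1, ← dist_eq_norm]; exact ha'
  have n2 : ‖v2‖ = (b:ℝ) := by rw [hv2, ← dist_eq_norm]; exact hb'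
  have n3 : ‖v3‖ = (c:ℝ) := by rw [hv3, ← dist_eq_norm]; exact hc'
  have g11 : ⟪v1, v1⟫ = (a:ℝ)^2 := by rw [real_inner_self_eq_norm_sq, n1]
  have g22 : ⟪v2, v2⟫ = (b:ℝ)^2 := by rw [real_inner_self_eq_norm_sq, n2]
  have g33 : ⟪v3, v3⟫ = (c:ℝ)^2 := by rw [real_inner_self_eq_norm_sq, n3]
  have g12 : ⟪v1, v2⟫ = (((a:ℝ)^2+(b:ℝ)^2-(d:ℝ)^2)/2) := by
    have hsub : v1 - v2 = P 1 - P 2 := by rw [hv1, hv2]; abel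
    have hn : ‖v1 - v2‖ = (d:ℝ) := by rw [hsub, ← dist_eq_norm]; exact hd
    have h0 := norm_sub_sq_real v1 v2
    rw [hn, n1, n2] at h0
    linarith
  have g13 : ⟪v1, v3⟫ = (((a:ℝ)^2+(c:ℝ)^2-(e:ℝ)^2)/2) := by
    have hsub : v1 - v3 = P 1 - P 3 := by rw [hv1, hv3]; abel
    have hn : ‖v1 - v3‖ = (e:ℝ) := by rw [hsub, ← dist_eq_norm]; exact he
    have h0 := norm_sub_sq_real v1 v3
    rw [hn, n1, n3] at h0
    linarith
  have g23 : ⟪v2, v3⟫ = (((b:ℝ)^2+(c:ℝ)^2-(f:ℝ)^2)/2) := by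
    have hsub : v2 - v3 = P 2 - P 3 := by rw [hv2, hv3]; abel
    have hn : ‖v2 - v3‖ = (f:ℝ) := by rw [hsub, ← dist_eq_norm]; exact hf
    have h0 := norm_sub_sq_real v2 v3
    rw [hn, n2, n3] at h0
    linarith
  have g21 : ⟪v2, v1⟫ = (((a:ℝ)^2+(b:ℝ)^2-(d:ℝ)^2)/2) := by rw [real_inner_comm]; exact g12
  have g31 : ⟪v3, v1⟫ = (((a:ℝ)^2+(c:ℝ)^2-(e:ℝ)^2)/2) := by rw [real_inner_comm]; exact g13
  have g32 : ⟪v3, v2⟫ = (((b:ℝ)^2+(c:ℝ)^2-(f:ℝ)^2)/2) := by rw [real_inner_comm]; exact g23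
  -- positivity of the Gram determinant of v1, v2
  have r1 : (0:ℝ) < (a:ℝ) + (b:ℝ) - (d:ℝ) := by
    have : (d:ℝ) < (a:ℝ) + (b:ℝ) := by exact_mod_cast T3
    linarith
  have r2 : (0:ℝ) < (a:ℝ) + (d:ℝ) - (b:ℝ) := by
    have : (b:ℝ) < (a:ℝ) + (d:ℝ) := by exact_mod_cast T2
    linarith
  have r3 : (0:ℝ) < (b:ℝ) + (d:ℝ) - (a:ℝ) := by
    have : (a:ℝ) < (b:ℝ) + (d:ℝ) := by exact_mod_cast T1
    linarith
  have r4 : (0:ℝ) < (a:ℝ) + (b:ℝ) + (d:ℝ) := by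
    have : (0:ℝ) ≤ (b:ℝ) := by positivity
    have h1 : (1:ℝ) ≤ (a:ℝ) := by exact_mod_cast ha1
    have : (0:ℝ) ≤ (d:ℝ) := by positivity
    linarith
  have Dpos : 0 < ((a:ℝ)^2*(b:ℝ)^2 - (((a:ℝ)^2+(b:ℝ)^2-(d:ℝ)^2)/2)^2) := by
    have hprod := mul_pos (mul_pos r1 r2) (mul_pos r3 r4)
    have hiden : 4*((a:ℝ)^2*(b:ℝ)^2 - (((a:ℝ)^2+(b:ℝ)^2-(d:ℝ)^2)/2)^2) =
        (((a:ℝ) + (b:ℝ) - (d:ℝ)) * ((a:ℝ) + (d:ℝ) - (b:ℝ))) * (((b:ℝ) + (d:ℝ) - (a:ℝ)) * ((a:ℝ) + (b:ℝ) + (d:ℝ))) := by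
      ring
    linarith
  have Dne : ((a:ℝ)^2*(b:ℝ)^2 - (((a:ℝ)^2+(b:ℝ)^2-(d:ℝ)^2)/2)^2) ≠ 0 := ne_of_gt Dpos
  -- linear independence of v1 v2
  have hli : LinearIndependent ℝ ![v1, v2] := by
    rw [LinearIndependent.pair_iff]
    intro s t hst
    have i1 : s * ⟪v1, v1⟫ + t * ⟪v2, v1⟫ = 0 := by
      have h0 := congrArg (fun u => ⟪u, v1⟫) hst
      simpa only [inner_add_left, real_inner_smul_left, inner_zero_left] using h0
    have i2 : s * ⟪v1, v2⟫ + t * ⟪v2, v2⟫ = 0 := by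
      have h0 := congrArg (fun u => ⟪u, v2⟫) hst
      simpa only [inner_add_left, real_inner_smul_left, inner_zero_left] using h0
    rw [g11, g21] at i1
    rw [g12, g22] at i2
    have hs : s * (((a:ℝ)^2*(b:ℝ)^2 - (((a:ℝ)^2+(b:ℝ)^2-(d:ℝ)^2)/2)^2)) = 0 := by linear_combination ((b:ℝ)^2)*i1 - (((a:ℝ)^2+(b:ℝ)^2-(d:ℝ)^2)/2)*i2
    have ht : t * (((a:ℝ)^2*(b:ℝ)^2 - (((a:ℝ)^2+(b:ℝ)^2-(d:ℝ)^2)/2)^2)) = 0 := by linear_combination ((a:ℝ)^2)*i2 - (((a:ℝ)^2+(b:ℝ)^2-(d:ℝ)^2)/2)*i1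
    exact ⟨by rcases mul_eq_zero.mp hs with h0 | h0; exact h0; exact absurd h0 Dne,
           by rcases mul_eq_zero.mp ht with h0 | h0; exact h0; exact absurd h0 Dne⟩
  have hsp : Submodule.span ℝ (Set.range ![v1, v2]) = ⊤ :=
    hli.span_eq_top_of_card_eq_finrank (by simp [finrank_euclideanSpace_fin])
  have hmem : v3 ∈ Submodule.span ℝ (Set.range ![v1, v2]) := by rw [hsp]; exact Submodule.mem_top
  obtain ⟨co, hco⟩ := (Submodule.mem_span_range_iff_exists_fun ℝ).mp hmem
  rw [Fin.sum_univ_two] at hco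
  simp only [Matrix.cons_val_zero, Matrix.cons_val_one, Matrix.head_cons] at hco
  have E1 : co 0 * ((a:ℝ)^2) + co 1 * ((((a:ℝ)^2+(b:ℝ)^2-(d:ℝ)^2)/2)) = (((a:ℝ)^2+(c:ℝ)^2-(e:ℝ)^2)/2) := by
    have h0 := congrArg (fun u => ⟪u, v1⟫) hco
    simp only [inner_add_left, real_inner_smul_left] at h0
    rw [g11, g21, g31] at h0
    exact h0
  have E2 : co 0 * ((((a:ℝ)^2+(b:ℝ)^2-(d:ℝ)^2)/2)) + co 1 * ((b:ℝ)^2) = (((b:ℝ)^2+(c:ℝ)^2-(f:ℝ)^2)/2) := by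
    have h0 := congrArg (fun u => ⟪u, v2⟫) hco
    simp only [inner_add_left, real_inner_smul_left] at h0
    rw [g12, g22, g32] at h0
    exact h0
  have E3 : co 0 * ((((a:ℝ)^2+(c:ℝ)^2-(e:ℝ)^2)/2)) + co 1 * ((((b:ℝ)^2+(c:ℝ)^2-(f:ℝ)^2)/2)) = (c:ℝ)^2 := by
    have h0 := congrArg (fun u => ⟪u, v3⟫) hco
    simp only [inner_add_left, real_inner_smul_left] at h0
    rw [g13, g23, g33] at h0
    exact h0
  have hal : co 0 * (((a:ℝ)^2*(b:ℝ)^2 - (((a:ℝ)^2+(b:ℝ)^2-(d:ℝ)^2)/2)^2)) = (((a:ℝ)^2+(c:ℝ)^2-(e:ℝ)^2)/2)*(b:ℝ)^2 - (((b:ℝ)^2+(c:ℝ)^2-(f:ℝ)^2)/2)*(((a:ℝ)^2+(b:ℝ)^2-(d:ℝ)^2)/2) := by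
    linear_combination ((b:ℝ)^2)*E1 - (((a:ℝ)^2+(b:ℝ)^2-(d:ℝ)^2)/2)*E2
  have hbe : co 1 * (((a:ℝ)^2*(b:ℝ)^2 - (((a:ℝ)^2+(b:ℝ)^2-(d:ℝ)^2)/2)^2)) = (((b:ℝ)^2+(c:ℝ)^2-(f:ℝ)^2)/2)*(a:ℝ)^2 - (((a:ℝ)^2+(c:ℝ)^2-(e:ℝ)^2)/2)*(((a:ℝ)^2+(b:ℝ)^2-(d:ℝ)^2)/2) := by
    linear_combination ((a:ℝ)^2)*E2 - (((a:ℝ)^2+(b:ℝ)^2-(d:ℝ)^2)/2)*E1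
  have hdetR : (c:ℝ)^2*(((a:ℝ)^2*(b:ℝ)^2 - (((a:ℝ)^2+(b:ℝ)^2-(d:ℝ)^2)/2)^2)) = (((a:ℝ)^2+(c:ℝ)^2-(e:ℝ)^2)/2)^2*(b:ℝ)^2 - 2*(((a:ℝ)^2+(b:ℝ)^2-(d:ℝ)^2)/2)*(((a:ℝ)^2+(c:ℝ)^2-(e:ℝ)^2)/2)*(((b:ℝ)^2+(c:ℝ)^2-(f:ℝ)^2)/2) + (((b:ℝ)^2+(c:ℝ)^2-(f:ℝ)^2)/2)^2*(a:ℝ)^2 := by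
    linear_combination (-(((a:ℝ)^2*(b:ℝ)^2 - (((a:ℝ)^2+(b:ℝ)^2-(d:ℝ)^2)/2)^2)))*E3 + (((a:ℝ)^2+(c:ℝ)^2-(e:ℝ)^2)/2)*hal + (((b:ℝ)^2+(c:ℝ)^2-(f:ℝ)^2)/2)*hbe
  have hdetR4 : (c:ℝ)^2*(4*(a:ℝ)^2*(b:ℝ)^2 - ((a:ℝ)^2+(b:ℝ)^2-(d:ℝ)^2)^2) =
      ((a:ℝ)^2+(c:ℝ)^2-(e:ℝ)^2)^2*(b:ℝ)^2 - ((a:ℝ)^2+(b:ℝ)^2-(d:ℝ)^2)*((a:ℝ)^2+(c:ℝ)^2-(e:ℝ)^2)*((b:ℝ)^2+(c:ℝ)^2-(f:ℝ)^2)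
      + ((b:ℝ)^2+(c:ℝ)^2-(f:ℝ)^2)^2*(a:ℝ)^2 := by linear_combination 4*hdetR
  have hdetZ : ((c:ℤ)^2 * (4*(a:ℤ)^2*(b:ℤ)^2 - ((a:ℤ)^2+(b:ℤ)^2-(d:ℤ)^2)^2) =
      ((a:ℤ)^2+(c:ℤ)^2-(e:ℤ)^2)^2*(b:ℤ)^2
      - ((a:ℤ)^2+(b:ℤ)^2-(d:ℤ)^2)*((a:ℤ)^2+(c:ℤ)^2-(e:ℤ)^2)*((b:ℤ)^2+(c:ℤ)^2-(f:ℤ)^2)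
      + ((b:ℤ)^2+(c:ℤ)^2-(f:ℤ)^2)^2*(a:ℤ)^2) := by exact_mod_cast hdetR4
  have hKey := key ⟨a, by omega⟩ ⟨b, by omega⟩ ⟨d, by omega⟩ ⟨T1, T2, T3, ha1⟩
    ⟨c, by omega⟩ ⟨e, by omega⟩ ⟨T4, T5, T6⟩
    ⟨f, by omega⟩ ⟨T7, T8, T9, T10, T11, T12⟩ hdetZ
  have hFR : (c:ℝ)^2*(4*(a:ℝ)^2*(b:ℝ)^2 - ((a:ℝ)^2+(b:ℝ)^2-(d:ℝ)^2)^2) =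
      ((a:ℝ)^2+(c:ℝ)^2-(e:ℝ)^2)*(b:ℝ)^2*((a:ℝ)^2-(b:ℝ)^2+(d:ℝ)^2) + ((b:ℝ)^2+(c:ℝ)^2-(f:ℝ)^2)*(a:ℝ)^2*((b:ℝ)^2-(a:ℝ)^2+(d:ℝ)^2) := by
    exact_mod_cast hKey
  -- the circumcenter
  have h2D : 2*((a:ℝ)^2*(b:ℝ)^2 - (((a:ℝ)^2+(b:ℝ)^2-(d:ℝ)^2)/2)^2) ≠ 0 := by positivity
  set x : ℝ := ((a:ℝ)^2*(b:ℝ)^2 - (b:ℝ)^2*(((a:ℝ)^2+(b:ℝ)^2-(d:ℝ)^2)/2))/(2*(((a:ℝ)^2*(b:ℝ)^2 - (((a:ℝ)^2+(b:ℝ)^2-(d:ℝ)^2)/2)^2))) with hx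
  set y : ℝ := ((b:ℝ)^2*(a:ℝ)^2 - (a:ℝ)^2*(((a:ℝ)^2+(b:ℝ)^2-(d:ℝ)^2)/2))/(2*(((a:ℝ)^2*(b:ℝ)^2 - (((a:ℝ)^2+(b:ℝ)^2-(d:ℝ)^2)/2)^2))) with hy
  set w : EuclideanSpace ℝ (Fin 2) := x • v1 + y • v2 with hw
  have hw1 : ⟪w, v1⟫ = (a:ℝ)^2/2 := by
    rw [hw]
    simp only [inner_add_left, real_inner_smul_left]
    rw [g11, g21, hx, hy]
    rw [div_mul_eq_mul_div, div_mul_eq_mul_div, ← add_div,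
      div_eq_div_iff h2D two_ne_zero]
    ring
  have hw2 : ⟪w, v2⟫ = (b:ℝ)^2/2 := by
    rw [hw]
    simp only [inner_add_left, real_inner_smul_left]
    rw [g12, g22, hx, hy]
    rw [div_mul_eq_mul_div, div_mul_eq_mul_div, ← add_div,
      div_eq_div_iff h2D two_ne_zero]
    ring
  have hw3 : ⟪w, v3⟫ = (c:ℝ)^2/2 := by
    rw [hw]
    simp only [inner_add_left, real_inner_smul_left]
    rw [g13, g23, hx, hy]
    rw [div_mul_eq_mul_div, div_mul_eq_mul_div, ← add_div,
      div_eq_div_iff h2D two_ne_zero]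
    linear_combination (-(1:ℝ)/2)*hFR
  have hd0 : dist (P 0) (P 0 + w) = ‖w‖ := by
    rw [dist_eq_norm]
    simp
  have hsub1 : P 1 - (P 0 + w) = v1 - w := by rw [hv1]; abel
  have hsub2 : P 2 - (P 0 + w) = v2 - w := by rw [hv2]; abel
  have hsub3 : P 3 - (P 0 + w) = v3 - w := by rw [hv3]; abel
  have hn1w : ‖v1 - w‖ = ‖w‖ := by
    apply norm_eq_of_sq_eq _ (norm_nonneg _) (norm_nonneg _)
    rw [norm_sub_sq_real]
    have h0 : ⟪v1, w⟫ = (a:ℝ)^2/2 := by rw [real_inner_comm]; exact hw1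
    rw [h0, n1]; ring
  have hn2w : ‖v2 - w‖ = ‖w‖ := by
    apply norm_eq_of_sq_eq _ (norm_nonneg _) (norm_nonneg _)
    rw [norm_sub_sq_real]
    have h0 : ⟪v2, w⟫ = (b:ℝ)^2/2 := by rw [real_inner_comm]; exact hw2
    rw [h0, n2]; ring
  have hn3w : ‖v3 - w‖ = ‖w‖ := by
    apply norm_eq_of_sq_eq _ (norm_nonneg _) (norm_nonneg _)
    rw [norm_sub_sq_real]
    have h0 : ⟪v3, w⟫ = (c:ℝ)^2/2 := by rw [real_inner_comm]; exact hw3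
    rw [h0, n3]; ring
  have hd1 : dist (P 1) (P 0 + w) = ‖w‖ := by rw [dist_eq_norm, hsub1, hn1w]
  have hd2 : dist (P 2) (P 0 + w) = ‖w‖ := by rw [dist_eq_norm, hsub2, hn2w]
  have hd3 : dist (P 3) (P 0 + w) = ‖w‖ := by rw [dist_eq_norm, hsub3, hn3w]
  have hwpos : 0 < ‖w‖ := by
    rcases (norm_nonneg w).lt_or_eq with h' | h'
    · exact h'
    · exfalso
      have hw0 : w = 0 := norm_eq_zero.mp h'.symm
      rw [hw0, sub_zero] at hn1w
      have h1 : (a:ℝ) = 0 := by rw [← n1, hn1w]; exact norm_zero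
      have : a = 0 := by exact_mod_cast h1
      omega
  exact hcirc 0 1 2 3 (by decide) (by decide) (by decide) (by decide) (by decide) (by decide)
    ⟨P 0 + w, ‖w‖, hwpos, hd0, hd1, hd2, hd3⟩

/-- There is an integral quadrilateral in general position with diameter `8`, and every
such configuration has diameter at least `8`. -/
theorem min_diameter_four_points :
    (∃ P : Fin 4 → EuclideanSpace ℝ (Fin 2), GoodConfig P ∧ HasDiameter P 8) ∧
    (∀ P : Fin 4 → EuclideanSpace ℝ (Fin 2), GoodConfig P →
      ∃ i j : Fin 4, (8 : ℝ) ≤ dist (P i) (P j)) := by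
  exact ⟨⟨Pex, Pex_good⟩, lower_bound⟩
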